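/- arXiv:2310.11972 — 3 statements merged into one kernel-verified Lean document; each statement's English description precedes it below -/
import Mathlib

section
/- In the category of posets and monotone maps, every strong epimorphism is a regular epimorphism. -/
open CategoryTheory CategoryTheory.Limits

namespace PartOrd

/-- A morphism of `PartOrd`, seen as an order hom. -/
def homFn {A B : PartOrd} (f : A ⟶ B) : A →o B := f.hom

section Aux

variable {A B : PartOrd} (f : A ⟶ B)

/-- The relation on `B` generated by images of related elements of `A`. -/
def auxRel : B → B → Prop := fun b b' => ∃ a a' : A, a ≤ a' ∧ homFn f a = b ∧ homFn f a' = b'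

lemma auxRel_le {b b' : B} (h : Relation.ReflTransGen (auxRel f) b b') : b ≤ b' := by
  induction h with
  | refl => exact le_refl _
  | tail _ h ih =>
    obtain ⟨a, a', hle, rfl, rfl⟩ := h
    exact ih.trans ((homFn f).monotone hle)

/-- The image of `f` equipped with the order generated by `f`. -/
def AuxCarrier : Type _ := {b : B // b ∈ Set.range (homFn f)}

instance : PartialOrder (AuxCarrier f) where
  le x y := Relation.ReflTransGen (auxRel f) x.1 y.1
  le_refl _ := Relation.ReflTransGen.refl
  le_trans _ _ _ h h' := Relation.ReflTransGen.trans h h'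
  le_antisymm x y h h' :=
    Subtype.ext (le_antisymm (auxRel_le f h) (auxRel_le f h'))

lemma auxCarrier_le_iff {x y : AuxCarrier f} :
    x ≤ y ↔ Relation.ReflTransGen (auxRel f) x.1 y.1 := Iff.rfl

end Aux

end PartOrd

/-- In the category of posets and monotone maps, every strong epimorphism
is a regular epimorphism. -/
theorem PartOrd.strongEpi_regular {A B : PartOrd} (f : A ⟶ B) (hf : StrongEpi f) :
    Nonempty (RegularEpi f) := by
  -- the factorization through the image with the generated order
  let B' : PartOrd := PartOrd.of (PartOrd.AuxCarrier f)
  let f' : A ⟶ B' :=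
    PartOrd.ofHom (⟨fun a => ⟨homFn f a, ⟨a, rfl⟩⟩, fun a a' h =>
      (auxCarrier_le_iff f).2 (Relation.ReflTransGen.single ⟨a, a', h, rfl, rfl⟩)⟩ : A →o B')
  let m : B' ⟶ B := PartOrd.ofHom (⟨fun x => x.1, fun x y h => PartOrd.auxRel_le f ((auxCarrier_le_iff f).1 h)⟩ : B' →o B)
  have hminj : Function.Injective (homFn m) := Subtype.val_injective
  have hm : Mono m := ConcreteCategory.mono_of_injective m hminj
  have sq : CommSq f' f m (𝟙 B) := ⟨rfl⟩
  obtain ⟨⟨⟨l, hl₁, hl₂⟩⟩⟩ := (hf.llp m).sq_hasLift sq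
  -- consequences of the lift
  have hval : ∀ b : B, (homFn l b).1 = b := fun b =>
    congrFun (congrArg (fun g : B ⟶ B => (homFn g : B → B)) hl₂) b
  have hsurj : ∀ b : B, b ∈ Set.range (homFn f) := fun b => (hval b) ▸ (homFn l b).2
  have hgen : ∀ {b b' : B}, b ≤ b' → Relation.ReflTransGen (PartOrd.auxRel f) b b' := by
    intro b b' h
    have h2 := (homFn l).monotone h
    have h3 : Relation.ReflTransGen (PartOrd.auxRel f) (homFn l b).1 (homFn l b').1 :=
      (auxCarrier_le_iff f).1 h2
    rwa [hval, hval] at h3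
  -- the kernel pair
  let W : PartOrd := PartOrd.of {p : ↥A × ↥A // homFn f p.1 = homFn f p.2}
  let lft : W ⟶ A := PartOrd.ofHom (⟨fun p => p.1.1, fun p q h => (Subtype.coe_le_coe.2 h).1⟩ : W →o A)
  let rgt : W ⟶ A := PartOrd.ofHom (⟨fun p => p.1.2, fun p q h => (Subtype.coe_le_coe.2 h).2⟩ : W →o A)
  refine ⟨{
    W := W
    left := lft
    right := rgt
    w := by
      apply PartOrd.hom_ext
      apply OrderHom.ext
      funext p
      exact p.2
    isColimit := Cofork.IsColimit.mk _ (fun s => ?_) (fun s => ?_) (fun s h hh => ?_)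
  }⟩
  · -- the descent map
    have key : ∀ a : A, ∀ b : B, homFn f a = b →
        homFn s.π ((hsurj b).choose) = homFn s.π a := by
      intro a b hb
      have h2 : homFn f ((hsurj b).choose) = homFn f a := (hsurj b).choose_spec.trans hb.symm
      exact congrFun (congrArg (fun g => (homFn g : _ → _)) (Cofork.condition s))
        (⟨(_, _), h2⟩ : _)
    have mono' : ∀ {b b' : B}, Relation.ReflTransGen (PartOrd.auxRel f) b b' →
        homFn s.π ((hsurj b).choose) ≤ homFn s.π ((hsurj b').choose) := by
      intro b b' hbb
      induction hbb with
      | refl => exact le_refl _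
      | tail _ hr ih =>
        obtain ⟨a, a', hle, rfl, rfl⟩ := hr
        calc homFn s.π ((hsurj _).choose)
            ≤ homFn s.π a := ih.trans (le_of_eq (key a _ rfl))
          _ ≤ homFn s.π a' := (homFn s.π).monotone hle
          _ = homFn s.π ((hsurj _).choose) := (key a' _ rfl).symm
    exact PartOrd.ofHom (⟨fun b => homFn s.π ((hsurj b).choose), fun b b' h => mono' (hgen h)⟩ : B →o _)
  · -- factorization
    apply PartOrd.hom_ext
    apply OrderHom.ext
    funext a
    exact congrFun (congrArg (fun g => (homFn g : _ → _)) (Cofork.condition s))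
      (⟨((hsurj (homFn f a)).choose, a), (hsurj (homFn f a)).choose_spec⟩ : _)
  · -- uniqueness
    apply PartOrd.hom_ext
    apply OrderHom.ext
    funext b
    obtain ⟨a, rfl⟩ := hsurj b
    have h1 := congrFun (congrArg (fun g : A ⟶ _ => (homFn g : A → _)) hh) a
    show homFn h (homFn f a) = _
    rw [show homFn h (homFn f a) = homFn s.π a from h1]
    exact (congrFun (congrArg (fun g => (homFn g : _ → _)) (Cofork.condition s))
      (⟨((hsurj (homFn f a)).choose, a), (hsurj (homFn f a)).choose_spec⟩ : _)).symm
end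

section
/- In the category of posets, a monotone map f : A → B is a regular epimorphism if and only if it is surjective and for all y ≤ y' in B there exist finitely many elements x_0 ≤ x_1, x_1' ≤ x_2, …, x_n' ≤ x_{n+1} in A with f(x_0) = y, f(x_1') = f(x_1), …, f(x_n') = f(x_n), and f(x_{n+1}) = y'. -/
open CategoryTheory CategoryTheory.Limits

section ZZ

variable {α β : Type*} [PartialOrder α] [PartialOrder β]

/-- The zig-zag relation on `β` induced by `f`. -/
def PartOrdZZ (f : α →o β) (y y' : β) : Prop :=
  ∃ (n : ℕ) (x : Fin (n + 2) → α) (x' : Fin n → α),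
    f (x 0) = y ∧ f (x (Fin.last (n + 1))) = y' ∧ x 0 ≤ x 1 ∧
    (∀ i : Fin n, x' i ≤ x i.succ.succ) ∧
    (∀ i : Fin n, f (x' i) = f (x i.succ.castSucc))

variable {f : α →o β}

lemma PartOrdZZ.refl (a : α) : PartOrdZZ f (f a) (f a) :=
  ⟨0, fun _ => a, Fin.elim0, rfl, rfl, le_refl _, fun i => i.elim0, fun i => i.elim0⟩

lemma PartOrdZZ.single {a b : α} (h : a ≤ b) : PartOrdZZ f (f a) (f b) :=
  ⟨0, ![a, b], Fin.elim0, rfl, rfl, h, fun i => i.elim0, fun i => i.elim0⟩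

lemma PartOrdZZ.head {a a₁ : α} (hle : a ≤ a₁) {y' : β}
    (h : PartOrdZZ f (f a₁) y') : PartOrdZZ f (f a) y' := by
  obtain ⟨n, x, x', h0, h1, h01, hj, hjeq⟩ := h
  refine ⟨n + 1, Fin.cons a (Fin.cons a₁ (fun i => x i.succ)), Fin.cons (x 0) x',
    ?_, ?_, ?_, ?_, ?_⟩
  · simp
  · have : (Fin.last (n + 2)) = (Fin.last (n + 1)).succ := by simp [Fin.ext_iff]
    rw [this, Fin.cons_succ]
    have : (Fin.last (n + 1)) = (Fin.last n).succ := by simp [Fin.ext_iff]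
    rw [this, Fin.cons_succ]
    simpa [← this] using h1
  · simpa using hle
  · intro j
    induction j using Fin.cases with
    | zero =>
        simp only [Fin.cons_zero, Fin.cons_succ]
        simpa using h01
    | succ k =>
        simp only [Fin.cons_succ]
        exact hj k
  · intro j
    induction j using Fin.cases with
    | zero =>
        simpa only [← Fin.succ_castSucc, Fin.castSucc_zero, Fin.cons_succ, Fin.cons_zero] using h0
    | succ k =>
        simpa only [Fin.cons_succ, ← Fin.succ_castSucc] using hjeq k

end ZZ
section ZZ2

variable {α β : Type*} [PartialOrder α] [PartialOrder β] {f : α →o β}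

/-- One step of the zig-zag. -/
def PartOrdStep (f : α →o β) (y y' : β) : Prop :=
  ∃ a b : α, a ≤ b ∧ f a = y ∧ f b = y'

lemma PartOrdZZ.of_rtg {y y' : β} (h : Relation.ReflTransGen (PartOrdStep f) y y')
    (hy : ∃ a, f a = y) : PartOrdZZ f y y' := by
  induction h using Relation.ReflTransGen.head_induction_on with
  | refl =>
      obtain ⟨a, rfl⟩ := hy
      exact PartOrdZZ.refl a
  | head hs _ ih =>
      obtain ⟨a, b, hab, rfl, rfl⟩ := hs
      exact PartOrdZZ.head hab (ih ⟨b, rfl⟩)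

lemma PartOrdStep.le {y y' : β} (h : PartOrdStep f y y') : y ≤ y' := by
  obtain ⟨a, b, hab, rfl, rfl⟩ := h; exact f.monotone hab

lemma PartOrd_rtg_le {y y' : β} (h : Relation.ReflTransGen (PartOrdStep f) y y') : y ≤ y' := by
  induction h with
  | refl => exact le_rfl
  | tail _ hs ih => exact le_trans ih hs.le

lemma PartOrdZZ.desc {γ : Type*} [PartialOrder γ] (g : α →o γ)
    (hg : ∀ a b : α, f a = f b → g a = g b) {y y' : β} (h : PartOrdZZ f y y')
    {a b : α} (ha : f a = y) (hb : f b = y') : g a ≤ g b := by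
  obtain ⟨n, x, x', h0, h1, h01, hj, hjeq⟩ := h
  have step : ∀ k : Fin (n + 1), g (x k.castSucc) ≤ g (x k.succ) := by
    intro k
    induction k using Fin.cases with
    | zero => simpa using g.monotone h01
    | succ m =>
        have e1 : g (x m.succ.castSucc) = g (x' m) := (hg _ _ (hjeq m)).symm
        rw [e1]
        exact g.monotone (hj m)
  have key : ∀ j : Fin (n + 2), g (x 0) ≤ g (x j) := by
    intro j
    induction j using Fin.induction with
    | zero => exact le_rfl
    | succ k ih => exact le_trans ih (step k)
  calc g a = g (x 0) := hg _ _ (by rw [ha, h0])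
    _ ≤ g (x (Fin.last (n + 1))) := key _
    _ = g b := hg _ _ (by rw [hb, h1])

/-- The carrier of the canonical coequalizer poset: the image of `f` with the
zig-zag order. -/
def PartOrdZImage (f : α →o β) : Type _ := {y : β // ∃ a, f a = y}

instance : PartialOrder (PartOrdZImage f) where
  le u v := Relation.ReflTransGen (PartOrdStep f) u.1 v.1
  le_refl u := Relation.ReflTransGen.refl
  le_trans u v w h h' := Relation.ReflTransGen.trans h h'
  le_antisymm u v h h' := Subtype.ext (le_antisymm (PartOrd_rtg_le h) (PartOrd_rtg_le h'))

/-- The corestriction of `f` to its zig-zag image. -/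
def PartOrdZImage.proj (f : α →o β) : α →o PartOrdZImage f where
  toFun a := ⟨f a, a, rfl⟩
  monotone' a b h := Relation.ReflTransGen.single ⟨a, b, h, rfl, rfl⟩

/-- The inclusion of the zig-zag image into the codomain. -/
def PartOrdZImage.incl (f : α →o β) : PartOrdZImage f →o β where
  toFun u := u.1
  monotone' u v h := PartOrd_rtg_le h

end ZZ2
lemma PartOrd.hom_congr {X Y : PartOrd} {g h : X ⟶ Y} (e : g = h) (x : ↥X) :
    (show ↥X →o ↥Y from g.hom) x = (show ↥X →o ↥Y from h.hom) x := by rw [e]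

/-- In the category of posets, a monotone map `f : A → B` is a regular
epimorphism iff it is surjective and every inequality `y ≤ y'` in `B` is generated by a
finite zig-zag of inequalities in `A`: there are `x₀ ≤ x₁, x₁' ≤ x₂, …, xₙ' ≤ x_{n+1}`
with `f x₀ = y`, `f xᵢ' = f xᵢ` for `i = 1, …, n`, and `f x_{n+1} = y'`. -/
theorem PartOrd.regularEpi_iff {A B : PartOrd} (f : A ⟶ B) :
    Nonempty (RegularEpi f) ↔
      (Function.Surjective ((forget PartOrd).map f) ∧
        ∀ y y' : B, y ≤ y' →
          ∃ (n : ℕ) (x : Fin (n + 2) → A) (x' : Fin n → A),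
            (forget PartOrd).map f (x 0) = y ∧
            (forget PartOrd).map f (x (Fin.last (n + 1))) = y' ∧
            x 0 ≤ x 1 ∧
            (∀ i : Fin n, x' i ≤ x i.succ.succ) ∧
            (∀ i : Fin n,
              (forget PartOrd).map f (x' i) = (forget PartOrd).map f (x i.succ.castSucc))) := by
  have F : ↥A →o ↥B := f.hom
  constructor
  · rintro ⟨re⟩
    haveI : RegularEpi f := re
    haveI : Epi f := RegularEpi.epi f re
    let C : PartOrd := PartOrd.of (PartOrdZImage (show ↥A →o ↥B from f.hom))
    let q : A ⟶ C := PartOrd.ofHom (PartOrdZImage.proj (show ↥A →o ↥B from f.hom))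
    let i : C ⟶ B := PartOrd.ofHom (PartOrdZImage.incl (show ↥A →o ↥B from f.hom))
    have hq : re.left ≫ q = re.right ≫ q := by
      apply PartOrd.hom_ext
      apply OrderHom.ext
      funext w
      apply Subtype.ext
      exact PartOrd.hom_congr re.w w
    let t : B ⟶ C := Cofork.IsColimit.desc re.isColimit q hq
    have ht : f ≫ t = q := Cofork.IsColimit.π_desc' re.isColimit q hq
    have hqi : q ≫ i = f := rfl
    have hti : t ≫ i = 𝟙 B := by
      rw [← cancel_epi f, ← Category.assoc, ht, hqi, Category.comp_id]
    have hval : ∀ y : ↥B, ((show ↥B →o ↥C from t.hom) y).1 = y := fun y =>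
      PartOrd.hom_congr hti y
    have hsurj : Function.Surjective (show ↥A →o ↥B from f.hom) := by
      intro y
      obtain ⟨a, ha⟩ := ((show ↥B →o ↥C from t.hom) y).2
      exact ⟨a, ha.trans (hval y)⟩
    refine ⟨hsurj, ?_⟩
    intro y y' h
    have hle : (show ↥B →o ↥C from t.hom) y ≤ (show ↥B →o ↥C from t.hom) y' :=
      (show ↥B →o ↥C from t.hom).monotone h
    have hrtg : Relation.ReflTransGen (PartOrdStep (show ↥A →o ↥B from f.hom)) y y' := by
      rw [← hval y, ← hval y']
      exact hle
    have hz : PartOrdZZ (show ↥A →o ↥B from f.hom) y y' := PartOrdZZ.of_rtg hrtg (hsurj y)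
    exact hz
  · rintro ⟨hsurj, hzz⟩
    let W : PartOrd := PartOrd.of {p : ↥A × ↥A // (show ↥A →o ↥B from f.hom) p.1 = (show ↥A →o ↥B from f.hom) p.2}
    let l : W ⟶ A := PartOrd.ofHom (OrderHom.mk (fun p => p.1.1) (fun _ _ h => h.1))
    let r : W ⟶ A := PartOrd.ofHom (OrderHom.mk (fun p => p.1.2) (fun _ _ h => h.2))
    have w : l ≫ f = r ≫ f := PartOrd.hom_ext (OrderHom.ext _ _ (funext fun p => p.2))
    have sec : ∀ y : ↥B, ∃ a : ↥A, (show ↥A →o ↥B from f.hom) a = y := fun y => hsurj y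
    choose s hs using sec
    refine ⟨⟨W, l, r, w, ?_⟩⟩
    refine Cofork.IsColimit.mk _ (fun c => ?_) (fun c => ?_) (fun c m hm => ?_)
    · -- desc
      have hg : ∀ a b : ↥A, (show ↥A →o ↥B from f.hom) a = (show ↥A →o ↥B from f.hom) b →
          (show ↥A →o ↥(c.pt) from c.π.hom) a = (show ↥A →o ↥(c.pt) from c.π.hom) b := by
        intro a b hab
        exact PartOrd.hom_congr c.condition (⟨(a, b), hab⟩ : ↥W)
      exact PartOrd.ofHom (OrderHom.mk (fun y => (show ↥A →o ↥(c.pt) from c.π.hom) (s y))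
        (fun y y' h => PartOrdZZ.desc _ hg (hzz y y' h) (hs y) (hs y')))
    · -- fac
      apply PartOrd.hom_ext
      apply OrderHom.ext
      funext a
      have hg : ∀ a b : ↥A, (show ↥A →o ↥B from f.hom) a = (show ↥A →o ↥B from f.hom) b →
          (show ↥A →o ↥(c.pt) from c.π.hom) a = (show ↥A →o ↥(c.pt) from c.π.hom) b := by
        intro a b hab
        exact PartOrd.hom_congr c.condition (⟨(a, b), hab⟩ : ↥W)
      exact hg _ _ (hs ((show ↥A →o ↥B from f.hom) a))
    · -- uniq
      apply PartOrd.hom_ext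
      apply OrderHom.ext
      funext y
      have h1 : (show ↥B →o ↥(c.pt) from m.hom) ((show ↥A →o ↥B from f.hom) (s y)) =
          (show ↥A →o ↥(c.pt) from c.π.hom) (s y) := PartOrd.hom_congr hm (s y)
      show (show ↥B →o ↥(c.pt) from m.hom) y = (show ↥A →o ↥(c.pt) from c.π.hom) (s y)
      calc (show ↥B →o ↥(c.pt) from m.hom) y
          = (show ↥B →o ↥(c.pt) from m.hom) ((show ↥A →o ↥B from f.hom) (s y)) := by rw [hs y]
        _ = (show ↥A →o ↥(c.pt) from c.π.hom) (s y) := h1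
end

section
/- Let K be a locally λ-presentable category and L a full reflective subcategory closed under λ-filtered colimits in K, with reflector L' and units ρ_X : X → L'X. Then an object A of K lies in L if and only if A is orthogonal to ρ_Y for every λ-presentable object Y of K. -/
open CategoryTheory CategoryTheory.Limits

universe v u

variable {C : Type u} [Category.{v} C]

/-- A small category `J` is `κ`-filtered if every diagram in `J` of size `< κ`
admits a cocone. -/
def IsCardFiltered (κ : Cardinal.{v}) (J : Type v) [SmallCategory J] : Prop :=
  ∀ (K : Type v) [SmallCategory K],
    Cardinal.mk (Σ a b : K, a ⟶ b) < κ → ∀ F : K ⥤ J, Nonempty (Cocone F)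

/-- An object `X` is `κ`-presentable if its covariant hom-functor preserves colimits of
`κ`-filtered diagrams. -/
def IsCardPresentable (κ : Cardinal.{v}) (X : C) : Prop :=
  ∀ (J : Type v) [SmallCategory J], IsCardFiltered κ J →
    Nonempty (PreservesColimitsOfShape J (coyoneda.obj (Opposite.op X)))

/-- A category is locally `κ`-presentable if it is cocomplete and has a small strong
generator (detecting family) consisting of `κ`-presentable objects. -/
def IsLocallyPresentable (κ : Cardinal.{v}) (C : Type u) [Category.{v} C] : Prop :=
  HasColimitsOfSize.{v, v} C ∧
    ∃ S : Set C, Small.{v} S ∧ ObjectProperty.IsDetecting S ∧ ∀ X ∈ S, IsCardPresentable κ X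

/-- A morphism `f : A ⟶ B` is a `κ`-pure epimorphism if every `κ`-presentable object is
projective with respect to it: every morphism from a `κ`-presentable object to `B`
factors through `f`. -/
def IsPureEpi (κ : Cardinal.{v}) {A B : C} (f : A ⟶ B) : Prop :=
  ∀ X : C, IsCardPresentable κ X → ∀ g : X ⟶ B, ∃ h : X ⟶ A, h ≫ f = g

namespace Statement11

/-! ### Gadget categories -/

inductive StarCat (T : Type v) : Type v
  | root : StarCat T
  | leaf : T → StarCat T

inductive StarHom {T : Type v} : StarCat T → StarCat T → Type v
  | id (x : StarCat T) : StarHom x x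
  | arr (t : T) : StarHom .root (.leaf t)

instance StarCat.category (T : Type v) : SmallCategory (StarCat T) where
  Hom a b := StarHom a b
  id x := StarHom.id x
  comp {a b c} f g := match f, g with
    | .id _, g => g
    | .arr t, .id _ => .arr t
  id_comp f := rfl
  comp_id f := by cases f <;> rfl
  assoc f g h := by cases f <;> cases g <;> rfl

instance StarCat.subsingletonHom (T : Type v) (a b : StarCat T) :
    Subsingleton (a ⟶ b) := by
  constructor; intro f g
  change StarHom _ _ at f g
  cases f <;> cases g <;> rfl

def StarCat.mkFunctor {T : Type v} {J : Type v} [SmallCategory J]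
    (j : J) (tg : T → J) (ar : ∀ t, j ⟶ tg t) : StarCat T ⥤ J where
  obj x := match x with | .root => j | .leaf t => tg t
  map {a b} f := match a, b, f with
    | _, _, .id _ => 𝟙 _
    | _, _, .arr t => ar t
  map_id x := rfl
  map_comp {a b c} f g := by
    change StarHom _ _ at f g
    cases f <;> cases g <;> simp <;> rfl

noncomputable def starEquiv {T : Type v} : StarCat T ≃ Option T where
  toFun x := match x with | .root => none | .leaf t => some t
  invFun x := match x with | none => .root | some t => .leaf t
  left_inv x := by cases x <;> rfl
  right_inv x := by cases x <;> rfl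

lemma mk_sigma_lt_of_subsingleton_hom {K : Type v} [SmallCategory K]
    {κ : Cardinal.{v}} (hκ : Cardinal.aleph0 ≤ κ)
    (hs : ∀ a b : K, Subsingleton (a ⟶ b)) (hK : Cardinal.mk K < κ) :
    Cardinal.mk (Σ a b : K, a ⟶ b) < κ := by
  have hinj : Function.Injective (fun p : Σ a b : K, a ⟶ b => (p.1, p.2.1)) := by
    rintro ⟨a, b, f⟩ ⟨a', b', f'⟩ h
    simp only [Prod.mk.injEq] at h
    obtain ⟨rfl, rfl⟩ := h
    have := (hs a b).elim f f'
    subst this; rfl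
  have h2 : Cardinal.mk (K × K) < κ := by
    rw [Cardinal.mk_prod]
    simpa using Cardinal.mul_lt_of_lt hκ hK hK
  exact lt_of_le_of_lt (Cardinal.mk_le_of_injective hinj) h2

lemma StarCat.mk_lt {T : Type v} {κ : Cardinal.{v}}
    (hκ : Cardinal.aleph0 ≤ κ) (hT : Cardinal.mk T < κ) :
    Cardinal.mk (StarCat T) < κ := by
  rw [Cardinal.mk_congr starEquiv, Cardinal.mk_option]
  exact Cardinal.add_lt_of_lt hκ hT (lt_of_lt_of_le Cardinal.one_lt_aleph0 hκ)

lemma star_lemma {κ : Cardinal.{v}} (hκ : Cardinal.aleph0 ≤ κ)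
    {J : Type v} [SmallCategory J] (hJ : IsCardFiltered κ J)
    {T : Type v} (hT : Cardinal.mk T < κ)
    (j : J) (tg : T → J) (ar : ∀ t, j ⟶ tg t) :
    ∃ (z : J) (ℓ : j ⟶ z) (m : ∀ t, tg t ⟶ z), ∀ t, ar t ≫ m t = ℓ := by
  obtain ⟨c⟩ := hJ (StarCat T)
    (mk_sigma_lt_of_subsingleton_hom hκ (StarCat.subsingletonHom T) (StarCat.mk_lt hκ hT))
    (StarCat.mkFunctor j tg ar)
  refine ⟨c.pt, c.ι.app .root, fun t => c.ι.app (.leaf t), fun t => ?_⟩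
  have := c.ι.naturality (StarHom.arr t : StarCat.root ⟶ StarCat.leaf t)
  simpa [StarCat.mkFunctor] using this

/-- Discrete upper bounds. -/
lemma discrete_lemma {κ : Cardinal.{v}} (hκ : Cardinal.aleph0 ≤ κ)
    {J : Type v} [SmallCategory J] (hJ : IsCardFiltered κ J)
    {T : Type v} (hT : Cardinal.mk T < κ) (tg : T → J) :
    ∃ (z : J) (m : ∀ t, tg t ⟶ z), True := by
  obtain ⟨c⟩ := hJ (Discrete T)
    (mk_sigma_lt_of_subsingleton_hom hκ (fun a b => by
      constructor; intro f g
      apply Subsingleton.elim (α := ULift (PLift _)))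
      (by rwa [Cardinal.mk_congr CategoryTheory.discreteEquiv]))
    (Discrete.functor tg)
  exact ⟨c.pt, fun t => c.ι.app ⟨t⟩, trivial⟩

/-- Parallel pair gadget. -/
inductive PairObj : Type v | src | tgt

inductive PairHom : PairObj.{v} → PairObj.{v} → Type v
  | id (x : PairObj) : PairHom x x
  | fst : PairHom .src .tgt
  | snd : PairHom .src .tgt

instance PairObj.category : SmallCategory PairObj.{v} where
  Hom a b := PairHom a b
  id x := PairHom.id x
  comp {a b c} f g := match f, g with
    | .id _, g => g
    | .fst, .id _ => .fst
    | .snd, .id _ => .snd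
  id_comp f := rfl
  comp_id f := by cases f <;> rfl
  assoc f g h := by cases f <;> cases g <;> rfl

def PairObj.mkFunctor {D : Type u} [Category.{v} D] {X Y : D} (f g : X ⟶ Y) :
    PairObj.{v} ⥤ D where
  obj x := match x with | .src => X | .tgt => Y
  map {a b} u := match a, b, u with
    | _, _, .id _ => 𝟙 _
    | _, _, .fst => f
    | _, _, .snd => g
  map_id x := rfl
  map_comp {a b c} u w := by
    change PairHom _ _ at u w
    cases u <;> cases w <;> simp <;> rfl

instance : Finite PairObj.{v} := by
  apply Finite.of_injective (fun x : PairObj.{v} => match x with | .src => true | .tgt => false)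
  intro x y h
  cases x <;> cases y <;> simp_all

def PairHom.tag : ∀ {a b : PairObj.{v}}, PairHom a b → Fin 4
  | _, _, .id .src => 0
  | _, _, .id .tgt => 1
  | _, _, .fst => 2
  | _, _, .snd => 3

instance (a b : PairObj.{v}) : Finite (PairHom a b) := by
  apply Finite.of_injective (fun f : PairHom a b => f.tag)
  intro f f' h
  cases f with
  | id x => cases f'; rfl
  | fst =>
    cases f' with
    | fst => rfl
    | snd => simp [PairHom.tag] at h
  | snd =>
    cases f' with
    | fst => simp [PairHom.tag] at h
    | snd => rfl

lemma PairObj.mk_sigma_lt {κ : Cardinal.{v}} (hκ : Cardinal.aleph0 ≤ κ) :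
    Cardinal.mk (Σ a b : PairObj.{v}, a ⟶ b) < κ := by
  refine lt_of_lt_of_le ?_ hκ
  have : Finite (Σ a b : PairObj.{v}, a ⟶ b) := by
    show Finite (Σ a b : PairObj.{v}, PairHom a b)
    infer_instance
  exact Cardinal.lt_aleph0_of_finite _

end Statement11

namespace Statement11

variable {C : Type u} [Category.{v} C]

lemma mk_obj_lt {K : Type v} [SmallCategory K] {κ : Cardinal.{v}}
    (hK : Cardinal.mk (Σ a b : K, a ⟶ b) < κ) : Cardinal.mk K < κ := by
  refine lt_of_le_of_lt (Cardinal.mk_le_of_injective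
    (f := fun a : K => (⟨a, a, 𝟙 a⟩ : Σ a b : K, a ⟶ b)) ?_) hK
  intro a a' h
  exact congrArg Sigma.fst h

lemma isFiltered_of_isCardFiltered {κ : Cardinal.{v}} (hκ : Cardinal.aleph0 ≤ κ)
    {J : Type v} [SmallCategory J] (hJ : IsCardFiltered κ J) : IsFiltered J := by
  have h1 : IsFilteredOrEmpty J := by
    constructor
    · intro X Y
      obtain ⟨z, m, -⟩ := discrete_lemma hκ hJ
        (T := ULift.{v} Bool) (by simpa using Cardinal.nat_lt_aleph0 2 |>.trans_le hκ)
        (fun b => if b.down then X else Y)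
      exact ⟨z, by simpa using m ⟨true⟩, by simpa using m ⟨false⟩, trivial⟩
    · intro X Y f g
      obtain ⟨c⟩ := hJ PairObj (PairObj.mk_sigma_lt hκ) (PairObj.mkFunctor f g)
      refine ⟨c.pt, c.ι.app .tgt, ?_⟩
      have h1 := c.ι.naturality (PairHom.fst : PairObj.src ⟶ PairObj.tgt)
      have h2 := c.ι.naturality (PairHom.snd : PairObj.src ⟶ PairObj.tgt)
      simp only [PairObj.mkFunctor, Functor.const_obj_map, Category.comp_id] at h1 h2
      exact h1.trans h2.symm
  have h2 : Nonempty J := by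
    obtain ⟨c⟩ := hJ (Discrete (PEmpty.{v+1}))
      (by
        refine lt_of_lt_of_le ?_ hκ
        have : Finite (Σ a b : Discrete PEmpty.{v+1}, a ⟶ b) := by
          refine Finite.of_injective (fun p => p.1) ?_
          rintro ⟨⟨⟨⟩⟩, -⟩
        exact Cardinal.lt_aleph0_of_finite _)
      (Discrete.functor PEmpty.elim)
    exact ⟨c.pt⟩
  exact IsFiltered.mk

/-- **Key Lemma**: a `<κ`-small colimit of `κ`-presentable objects is `κ`-presentable. -/
lemma isCardPresentable_colimit {κ : Cardinal.{v}} (hκ : Cardinal.aleph0 ≤ κ)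
    {K : Type v} [SmallCategory K] (hK : Cardinal.mk (Σ a b : K, a ⟶ b) < κ)
    (G : K ⥤ C) (c : Cocone G) (hc : IsColimit c)
    (hG : ∀ k, IsCardPresentable κ (G.obj k)) :
    IsCardPresentable κ c.pt := by
  intro J _ hJ
  have hfil : IsFiltered J := isFiltered_of_isCardFiltered hκ hJ
  constructor
  constructor
  intro D
  constructor
  intro d hd
  constructor
  have hGk : ∀ k : K, IsColimit ((coyoneda.obj (Opposite.op (G.obj k))).mapCocone d) :=
    fun k => by
      have := (hG k J hJ).some
      exact isColimitOfPreserves _ hd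
  -- a reusable equalization step
  have equalize : ∀ (k : K) (j : J) (p q : G.obj k ⟶ D.obj j),
      p ≫ d.ι.app j = q ≫ d.ι.app j →
      ∃ (j' : J) (t : j ⟶ j'), p ≫ D.map t = q ≫ D.map t := by
    intro k j p q hpq
    have heq : ((coyoneda.obj (Opposite.op (G.obj k))).mapCocone d).ι.app j p =
        ((coyoneda.obj (Opposite.op (G.obj k))).mapCocone d).ι.app j q := hpq
    rw [Types.FilteredColimit.isColimit_eq_iff _ (hGk k)] at heq
    obtain ⟨j', f, g, hfg⟩ := heq
    have hfg' : p ≫ D.map f = q ≫ D.map g := hfg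
    refine ⟨_, f ≫ IsFiltered.coeqHom f g, ?_⟩
    calc p ≫ D.map (f ≫ IsFiltered.coeqHom f g)
        = (p ≫ D.map f) ≫ D.map (IsFiltered.coeqHom f g) := by simp
      _ = (q ≫ D.map g) ≫ D.map (IsFiltered.coeqHom f g) := by rw [hfg']
      _ = q ≫ D.map (g ≫ IsFiltered.coeqHom f g) := by simp
      _ = q ≫ D.map (f ≫ IsFiltered.coeqHom f g) := by
            rw [← IsFiltered.coeq_condition]
  apply Types.FilteredColimit.isColimitOf
  -- SURJECTIVITY
  · intro x
    let x' : c.pt ⟶ d.pt := x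
    have step1 : ∀ k : K, ∃ (j : J) (y : G.obj k ⟶ D.obj j),
        y ≫ d.ι.app j = c.ι.app k ≫ x' := by
      intro k
      obtain ⟨j, y, hy⟩ := Types.jointly_surjective (D ⋙ coyoneda.obj (Opposite.op (G.obj k)))
        (hGk k) (c.ι.app k ≫ x')
      exact ⟨j, y, hy⟩
    choose j₁ y₁ hy₁ using step1
    obtain ⟨j₀, w, -⟩ := discrete_lemma hκ hJ (mk_obj_lt hK) j₁
    obtain ⟨z, hz₁⟩ : ∃ z : ∀ k, G.obj k ⟶ D.obj j₀,
        ∀ k, z k ≫ d.ι.app j₀ = c.ι.app k ≫ x' := by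
      refine ⟨fun k => y₁ k ≫ D.map (w k), fun k => ?_⟩
      rw [Category.assoc, d.w (w k)]
      exact hy₁ k
    have step2 : ∀ m : Σ a b : K, a ⟶ b, ∃ (j' : J) (t : j₀ ⟶ j'),
        (G.map m.2.2 ≫ z m.2.1) ≫ D.map t = z m.1 ≫ D.map t := by
      rintro ⟨a, b, m⟩
      apply equalize a j₀
      rw [Category.assoc, hz₁ b, hz₁ a, ← Category.assoc, c.w m]
    choose j₂ t₂ ht₂ using step2
    obtain ⟨j₃, ℓ, mm, hmm⟩ := star_lemma hκ hJ hK j₀ j₂ t₂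
    have hnat : ∀ (a b : K) (m : a ⟶ b),
        G.map m ≫ (z b ≫ D.map ℓ) = z a ≫ D.map ℓ := by
      intro a b m
      rw [← hmm ⟨a, b, m⟩]
      have h5 := ht₂ ⟨a, b, m⟩
      simp only [Functor.map_comp, ← Category.assoc] at h5 ⊢
      rw [h5]
    let cone2 : Cocone G :=
      ⟨D.obj j₃,
        { app := fun k => z k ≫ D.map ℓ,
          naturality := fun a b m => by simpa using hnat a b m }⟩
    refine ⟨j₃, hc.desc cone2, ?_⟩
    have hgoal : x' = hc.desc cone2 ≫ d.ι.app j₃ := by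
      apply hc.hom_ext
      intro k
      have hdesc : c.ι.app k ≫ hc.desc cone2 = z k ≫ D.map ℓ := hc.fac cone2 k
      rw [← Category.assoc, hdesc, Category.assoc, d.w ℓ, hz₁ k]
    exact hgoal
  -- INJECTIVITY
  · intro i j xi xj hij
    have hij' : xi ≫ d.ι.app i = xj ≫ d.ι.app j := hij
    obtain ⟨jm, fi, fj, -⟩ := IsFilteredOrEmpty.cocone_objs i j
    have huv : (xi ≫ D.map fi) ≫ d.ι.app jm = (xj ≫ D.map fj) ≫ d.ι.app jm := by
      rw [Category.assoc, Category.assoc, d.w fi, d.w fj]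
      exact hij'
    have step : ∀ k : K, ∃ (j' : J) (t : jm ⟶ j'),
        (c.ι.app k ≫ xi ≫ D.map fi) ≫ D.map t = (c.ι.app k ≫ xj ≫ D.map fj) ≫ D.map t := by
      intro k
      apply equalize k jm
      simp only [Category.assoc] at huv ⊢
      rw [huv]
    choose j₂ t₂ ht₂ using step
    obtain ⟨j₃, ℓ, mm, hmm⟩ := star_lemma hκ hJ (mk_obj_lt hK) jm j₂ t₂
    refine ⟨j₃, fi ≫ ℓ, fj ≫ ℓ, ?_⟩
    have key : (xi ≫ D.map fi) ≫ D.map ℓ = (xj ≫ D.map fj) ≫ D.map ℓ := by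
      apply hc.hom_ext
      intro k
      rw [← hmm k]
      have h5 := ht₂ k
      simp only [Functor.map_comp, ← Category.assoc] at h5 ⊢
      rw [h5]
    show xi ≫ D.map (fi ≫ ℓ) = xj ≫ D.map (fj ≫ ℓ)
    simp only [Functor.map_comp, ← Category.assoc]
    exact key

end Statement11

namespace Statement11

variable {C : Type u} [Category.{v} C]

section ChosenColimits

variable [HasColimitsOfSize.{v, v} C]

noncomputable def coprodObj {I : Type v} (f : I → C) : C := colimit (Discrete.functor f)

noncomputable def coprodι {I : Type v} (f : I → C) (i : I) : f i ⟶ coprodObj f :=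
  colimit.ι (Discrete.functor f) ⟨i⟩

noncomputable def coprodDesc {I : Type v} (f : I → C) {Z : C} (w : ∀ i, f i ⟶ Z) :
    coprodObj f ⟶ Z :=
  colimit.desc (Discrete.functor f) ⟨Z, Discrete.natTrans (fun i => w i.as)⟩

@[simp] lemma coprodι_desc {I : Type v} (f : I → C) {Z : C} (w : ∀ i, f i ⟶ Z) (i : I) :
    coprodι f i ≫ coprodDesc f w = w i :=
  colimit.ι_desc _ _

lemma coprod_hom_ext {I : Type v} (f : I → C) {Z : C} {p q : coprodObj f ⟶ Z}
    (h : ∀ i, coprodι f i ≫ p = coprodι f i ≫ q) : p = q := by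
  apply colimit.hom_ext
  rintro ⟨i⟩
  exact h i

noncomputable def coeqObj {X Y : C} (f g : X ⟶ Y) : C := colimit (PairObj.mkFunctor f g)

noncomputable def coeqπ {X Y : C} (f g : X ⟶ Y) : Y ⟶ coeqObj f g :=
  colimit.ι (PairObj.mkFunctor f g) .tgt

lemma coeq_condition' {X Y : C} (f g : X ⟶ Y) : f ≫ coeqπ f g = g ≫ coeqπ f g := by
  have h1 := colimit.w (PairObj.mkFunctor f g) (PairHom.fst : PairObj.src ⟶ PairObj.tgt)
  have h2 := colimit.w (PairObj.mkFunctor f g) (PairHom.snd : PairObj.src ⟶ PairObj.tgt)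
  exact h1.trans h2.symm

/-- The cocone used for `coeqDesc`. -/
noncomputable def coeqCocone {X Y : C} (f g : X ⟶ Y) {Z : C} (w : Y ⟶ Z)
    (hw : f ≫ w = g ≫ w) : Cocone (PairObj.mkFunctor f g) where
  pt := Z
  ι := { app := fun x => match x with | .src => f ≫ w | .tgt => w
         naturality := fun a b m => by
            change PairHom _ _ at m
            cases m with
            | id => cases a <;> simp [PairObj.mkFunctor]
            | fst => simp [PairObj.mkFunctor]
            | snd => simpa [PairObj.mkFunctor] using hw.symm }

noncomputable def coeqDesc {X Y : C} (f g : X ⟶ Y) {Z : C} (w : Y ⟶ Z)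
    (hw : f ≫ w = g ≫ w) : coeqObj f g ⟶ Z :=
  colimit.desc _ (coeqCocone f g w hw)

@[simp] lemma coeqπ_desc {X Y : C} (f g : X ⟶ Y) {Z : C} (w : Y ⟶ Z)
    (hw : f ≫ w = g ≫ w) : coeqπ f g ≫ coeqDesc f g w hw = w :=
  colimit.ι_desc _ _

end ChosenColimits

section Closure

variable (κ : Cardinal.{v}) [HasColimitsOfSize.{v, v} C]

/-- One step of closure under `<κ`-small coproducts and coequalizers. -/
def closeOnce (U : Set C) : Set C :=
  U ∪ {Z | ∃ (I : Set κ.ord.ToType) (f : I → C),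
        Cardinal.mk I < κ ∧ (∀ i, f i ∈ U) ∧ Z = coprodObj f}
    ∪ {Z | ∃ (X Y : C) (_ : X ∈ U) (_ : Y ∈ U) (f g : X ⟶ Y), Z = coeqObj f g}

lemma subset_closeOnce (U : Set C) : U ⊆ closeOnce κ U :=
  fun _ h => Or.inl (Or.inl h)

lemma closeOnce_mono {U V : Set C} (h : U ⊆ V) : closeOnce κ U ⊆ closeOnce κ V := by
  rintro Z (((hZ | ⟨I, f, hI, hf, rfl⟩) | ⟨X, Y, hX, hY, f, g, rfl⟩))
  · exact Or.inl (Or.inl (h hZ))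
  · exact Or.inl (Or.inr ⟨I, f, hI, fun i => h (hf i), rfl⟩)
  · exact Or.inr ⟨X, Y, h hX, h hY, f, g, rfl⟩

lemma closeOnce_small (U : Set C) [Small.{v} U] : Small.{v} (closeOnce κ U) := by
  have h1 : Small.{v} ({Z | ∃ (I : Set κ.ord.ToType) (f : I → C),
      Cardinal.mk I < κ ∧ (∀ i, f i ∈ U) ∧ Z = coprodObj f} : Set C) := by
    apply small_of_surjective
      (f := fun p : Σ I : {I : Set κ.ord.ToType // Cardinal.mk I < κ}, (I.1 → U) =>
        (⟨coprodObj (fun i => ((p.2 i : C))), ⟨p.1.1, fun i => (p.2 i : C), p.1.2,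
          fun i => (p.2 i).2, rfl⟩⟩ : {Z | ∃ (I : Set κ.ord.ToType) (f : I → C),
            Cardinal.mk I < κ ∧ (∀ i, f i ∈ U) ∧ Z = coprodObj f}))
    rintro ⟨Z, I, f, hI, hf, rfl⟩
    exact ⟨⟨⟨I, hI⟩, fun i => ⟨f i, hf i⟩⟩, rfl⟩
  have h2 : Small.{v} ({Z | ∃ (X Y : C) (_ : X ∈ U) (_ : Y ∈ U) (f g : X ⟶ Y),
      Z = coeqObj f g} : Set C) := by
    apply small_of_surjective
      (f := fun p : Σ XY : U × U, ((XY.1 : C) ⟶ XY.2) × ((XY.1 : C) ⟶ XY.2) =>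
        (⟨coeqObj p.2.1 p.2.2, ⟨p.1.1, p.1.2, p.1.1.2, p.1.2.2, p.2.1, p.2.2, rfl⟩⟩ :
          {Z | ∃ (X Y : C) (_ : X ∈ U) (_ : Y ∈ U) (f g : X ⟶ Y), Z = coeqObj f g}))
    rintro ⟨Z, X, Y, hX, hY, f, g, rfl⟩
    exact ⟨⟨⟨⟨X, hX⟩, ⟨Y, hY⟩⟩, f, g⟩, rfl⟩
  unfold closeOnce
  infer_instance

/-- The transfinite iteration. -/
noncomputable def Tfun (S : Set C) : Ordinal.{v} → Set C
  | o => S ∪ ⋃ (o' : Set.Iio o), closeOnce κ (Tfun S o'.1)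
  termination_by o => o
  decreasing_by exact o'.2

lemma Tfun_eq (S : Set C) (o : Ordinal.{v}) :
    Tfun κ S o = S ∪ ⋃ (o' : Set.Iio o), closeOnce κ (Tfun κ S o'.1) := by
  rw [Tfun]

lemma S_subset_Tfun (S : Set C) (o : Ordinal.{v}) : S ⊆ Tfun κ S o := by
  rw [Tfun_eq]; exact Set.subset_union_left

lemma closeOnce_subset_Tfun (S : Set C) {o' o : Ordinal.{v}} (h : o' < o) :
    closeOnce κ (Tfun κ S o') ⊆ Tfun κ S o := by
  rw [Tfun_eq κ S o]
  exact le_trans (Set.subset_iUnion (fun o'' : Set.Iio o => closeOnce κ (Tfun κ S o''.1))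
    ⟨o', h⟩) Set.subset_union_right

lemma Tfun_subset_Tfun (S : Set C) {o' o : Ordinal.{v}} (h : o' < o) :
    Tfun κ S o' ⊆ Tfun κ S o := by
  have h1 := subset_closeOnce κ (Tfun κ S o')
  exact le_trans h1 (closeOnce_subset_Tfun κ S h)

lemma Tfun_mono (S : Set C) {o' o : Ordinal.{v}} (h : o' ≤ o) :
    Tfun κ S o' ⊆ Tfun κ S o := by
  rcases eq_or_lt_of_le h with rfl | h
  · exact subset_rfl
  · exact Tfun_subset_Tfun κ S h

lemma Tfun_small (S : Set C) [Small.{v} S] (o : Ordinal.{v}) : Small.{v} (Tfun κ S o) := by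
  induction o using Ordinal.induction with
  | h o IH =>
    rw [Tfun_eq]
    haveI : Small.{v} (Set.Iio o) := ⟨⟨o.ToType, ⟨(Ordinal.ToType.mk (o := o)).toEquiv⟩⟩⟩
    haveI : ∀ o' : Set.Iio o, Small.{v} (closeOnce κ (Tfun κ S o'.1)) := fun o' => by
      haveI := IH o'.1 o'.2
      exact closeOnce_small κ _
    infer_instance

/-- The set of objects used for the canonical diagram. -/
noncomputable def TSet (S : Set C) : Set C := Tfun κ S κ.ord

lemma S_subset_TSet (S : Set C) : S ⊆ TSet κ S := S_subset_Tfun κ S _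

lemma TSet_small (S : Set C) [Small.{v} S] : Small.{v} (TSet κ S) := Tfun_small κ S _

/-- Rank: every element appears at a stage `< κ.ord`. -/
lemma exists_rank (hκ : κ.IsRegular) (S : Set C) {X : C} (hX : X ∈ TSet κ S) :
    ∃ o < κ.ord, X ∈ Tfun κ S o := by
  have hlim : Order.IsSuccLimit κ.ord := Cardinal.isSuccLimit_ord hκ.aleph0_le
  rw [TSet, Tfun_eq] at hX
  rcases hX with hX | hX
  · exact ⟨0, hlim.pos, S_subset_Tfun κ S 0 hX⟩
  · obtain ⟨s, ⟨o', rfl⟩, hs⟩ := hX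
    exact ⟨o'.1 + 1, by simpa using hlim.succ_lt o'.2, closeOnce_subset_Tfun κ S (lt_add_one o'.1) hs⟩

lemma coprod_mem_TSet (hκ : κ.IsRegular) (S : Set C)
    {I : Set κ.ord.ToType} (f : I → C) (hI : Cardinal.mk I < κ)
    (hf : ∀ i, f i ∈ TSet κ S) : coprodObj f ∈ TSet κ S := by
  choose r hr hr2 using fun i => exists_rank κ hκ S (hf i)
  have hsup : iSup r < κ.ord := Cardinal.iSup_lt_ord_of_isRegular hκ hI hr
  have hmem : ∀ i, f i ∈ Tfun κ S (iSup r) :=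
    fun i => Tfun_mono κ S (Ordinal.le_iSup r i) (hr2 i)
  apply closeOnce_subset_Tfun κ S hsup
  exact Or.inl (Or.inr ⟨I, f, hI, hmem, rfl⟩)

lemma coeq_mem_TSet (hκ : κ.IsRegular) (S : Set C)
    {X Y : C} (hX : X ∈ TSet κ S) (hY : Y ∈ TSet κ S) (f g : X ⟶ Y) :
    coeqObj f g ∈ TSet κ S := by
  obtain ⟨o₁, ho₁, h₁⟩ := exists_rank κ hκ S hX
  obtain ⟨o₂, ho₂, h₂⟩ := exists_rank κ hκ S hY
  have hmax : max o₁ o₂ < κ.ord := max_lt ho₁ ho₂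
  apply closeOnce_subset_Tfun κ S hmax
  exact Or.inr ⟨X, Y, Tfun_mono κ S (le_max_left _ _) h₁,
    Tfun_mono κ S (le_max_right _ _) h₂, f, g, rfl⟩

/-- All members of `TSet` are `κ`-presentable. -/
lemma TSet_presentable (hκ : κ.IsRegular) (S : Set C)
    (hS : ∀ X ∈ S, IsCardPresentable κ X) :
    ∀ X ∈ TSet κ S, IsCardPresentable κ X := by
  suffices h : ∀ o : Ordinal.{v}, ∀ X ∈ Tfun κ S o, IsCardPresentable κ X by
    exact h κ.ord
  intro o
  induction o using Ordinal.induction with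
  | h o IH =>
    intro X hX
    rw [Tfun_eq] at hX
    rcases hX with hX | hX
    · exact hS X hX
    · obtain ⟨s, ⟨o', rfl⟩, hs⟩ := hX
      rcases hs with ((hX | ⟨I, f, hI, hf, rfl⟩) | ⟨Y, Z, hY, hZ, f, g, rfl⟩)
      · exact IH o'.1 o'.2 X hX
      · -- coproduct case
        have hsig : Cardinal.mk (Σ a b : Discrete I, a ⟶ b) < κ := by
          apply mk_sigma_lt_of_subsingleton_hom hκ.aleph0_le
          · intro a b
            constructor
            intro p q
            apply Subsingleton.elim (α := ULift (PLift _))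
          · rwa [Cardinal.mk_congr CategoryTheory.discreteEquiv]
        exact isCardPresentable_colimit hκ.aleph0_le hsig (Discrete.functor f)
          (colimit.cocone _) (colimit.isColimit _)
          (fun k => IH o'.1 o'.2 (f k.as) (hf k.as))
      · -- coequalizer case
        exact isCardPresentable_colimit hκ.aleph0_le (PairObj.mk_sigma_lt hκ.aleph0_le)
          (PairObj.mkFunctor f g) (colimit.cocone _) (colimit.isColimit _)
          (fun k => by cases k <;> [exact IH o'.1 o'.2 Y hY; exact IH o'.1 o'.2 Z hZ])

end Closure

end Statement11

namespace Statement11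

variable {C : Type u} [Category.{v} C]

lemma family_eqToHom {ι : Sort*} (obj : ι → C) {Z : C} (v : ∀ i, obj i ⟶ Z) {x y : ι}
    (h : x = y) : eqToHom (congrArg obj h) ≫ v y = v x := by subst h; simp

section CanonSec

variable (κ : Cardinal.{v}) [HasColimitsOfSize.{v, v} C] (S : Set C) (A : C)

/-- The canonical diagram category. -/
abbrev Canon := CostructuredArrow (ObjectProperty.ι (· ∈ TSet κ S)) A

instance canon_small [Small.{v} S] : Small.{v} (Canon κ S A) := by
  haveI : Small.{v} (TSet κ S) := TSet_small κ S
  apply small_of_injective (f := fun o : Canon κ S A =>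
    (⟨⟨o.left.obj, o.left.property⟩, o.hom⟩ : Σ X : TSet κ S, ((X : C) ⟶ A)))
  rintro ⟨⟨l₁, p₁⟩, ⟨⟨⟩⟩, h₁⟩ ⟨⟨l₂, p₂⟩, ⟨⟨⟩⟩, h₂⟩ h
  obtain rfl : l₁ = l₂ :=
    congrArg (fun p : Σ X : TSet κ S, ((X : C) ⟶ A) => (p.1 : C)) h
  obtain rfl : h₁ = h₂ := eq_of_heq (Sigma.ext_iff.mp h).2
  rfl

instance canon_essSmall [Small.{v} S] : EssentiallySmall.{v} (Canon κ S A) :=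
  essentiallySmall_of_small_of_locallySmall _

variable [Small.{v} S]

/-- The small model of the canonical diagram category. -/
noncomputable abbrev CanonJ := SmallModel (Canon κ S A)

noncomputable abbrev canonEquiv : Canon κ S A ≌ CanonJ κ S A := equivSmallModel _

/-- Underlying-object functor. -/
noncomputable def projC : Canon κ S A ⥤ C :=
  CostructuredArrow.proj _ _ ⋙ ObjectProperty.ι _

/-- The canonical diagram of `A`. -/
noncomputable def canonDiagram : CanonJ κ S A ⥤ C :=
  (canonEquiv κ S A).inverse ⋙ projC κ S A

lemma canonDiagram_mem (j : CanonJ κ S A) :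
    (canonDiagram κ S A).obj j ∈ TSet κ S :=
  ((canonEquiv κ S A).inverse.obj j).left.property

/-- The cocone over `A`. -/
noncomputable def canonCoconeA : Cocone (canonDiagram κ S A) where
  pt := A
  ι := { app := fun j => ((canonEquiv κ S A).inverse.obj j).hom
         naturality := fun j j' m => by
            have := CostructuredArrow.w ((canonEquiv κ S A).inverse.map m)
            exact this.trans (Category.comp_id _).symm }

end CanonSec

end Statement11

namespace Statement11

variable {C : Type u} [Category.{v} C]

lemma canon_filtered (κ : Cardinal.{v}) [HasColimitsOfSize.{v, v} C] (S : Set C)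
    [Small.{v} S] (A : C) (hκ : κ.IsRegular) :
    IsCardFiltered κ (CanonJ κ S A) := by
  intro K _ hK F
  let e := canonEquiv κ S A
  let G : K ⥤ C := F ⋙ canonDiagram κ S A
  have hmem : ∀ k, G.obj k ∈ TSet κ S := fun k => canonDiagram_mem κ S A (F.obj k)
  let uA : ∀ k : K, G.obj k ⟶ A := fun k => (e.inverse.obj (F.obj k)).hom
  have huA : ∀ {a b : K} (m : a ⟶ b), G.map m ≫ uA b = uA a := fun {a b} m => by
    exact
      CostructuredArrow.w ((canonEquiv κ S A).inverse.map (F.map m))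
  -- The key construction: a `TSet` object `Q` over `A` receiving the diagram.
  obtain ⟨Q, hQmem, qA, ψ, hψA, hψnat⟩ :
      ∃ (Q : C) (_ : Q ∈ TSet κ S) (qA : Q ⟶ A) (ψ : ∀ k : K, G.obj k ⟶ Q),
        (∀ k, ψ k ≫ qA = uA k) ∧
        (∀ (a b : K) (m : a ⟶ b), G.map m ≫ ψ b = ψ a) := by
    -- coproduct over objects
    obtain ⟨emb⟩ : Nonempty (K ↪ κ.ord.ToType) := by
      rw [← Cardinal.le_def, Cardinal.mk_ord_toType]
      exact (mk_obj_lt hK).le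
    let eI : K ≃ Set.range emb := Equiv.ofInjective emb emb.injective
    let famN : ↥(Set.range emb) → C := fun i => G.obj (eI.symm i)
    have hIlt : Cardinal.mk (Set.range emb) < κ := by
      rw [Cardinal.mk_range_eq emb emb.injective]
      exact mk_obj_lt hK
    have hWobj : coprodObj famN ∈ TSet κ S :=
      coprod_mem_TSet κ hκ S famN hIlt (fun i => hmem _)
    let hW : ∀ k : K, G.obj k ⟶ coprodObj famN := fun k =>
      eqToHom (congrArg G.obj (eI.symm_apply_apply k).symm) ≫ coprodι famN (eI k)
    let mapA : coprodObj famN ⟶ A := coprodDesc famN (fun i => uA (eI.symm i))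
    have hWA : ∀ k, hW k ≫ mapA = uA k := by
      intro k
      show (eqToHom _ ≫ coprodι famN (eI k)) ≫ coprodDesc famN (fun i => uA (eI.symm i))
        = uA k
      rw [Category.assoc, coprodι_desc]
      exact family_eqToHom G.obj uA (eI.symm_apply_apply k).symm
    -- coproduct over morphisms
    obtain ⟨emb2⟩ : Nonempty ((Σ a b : K, a ⟶ b) ↪ κ.ord.ToType) := by
      rw [← Cardinal.le_def, Cardinal.mk_ord_toType]
      exact hK.le
    let eM : (Σ a b : K, a ⟶ b) ≃ Set.range emb2 := Equiv.ofInjective emb2 emb2.injective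
    let famM : ↥(Set.range emb2) → C := fun i => G.obj (eM.symm i).1
    have hMlt : Cardinal.mk (Set.range emb2) < κ := by
      rw [Cardinal.mk_range_eq emb2 emb2.injective]
      exact hK
    have hWM : coprodObj famM ∈ TSet κ S :=
      coprod_mem_TSet κ hκ S famM hMlt (fun i => hmem _)
    let vα : ∀ m : Σ a b : K, a ⟶ b, G.obj m.1 ⟶ coprodObj famN := fun m => hW m.1
    let vβ : ∀ m : Σ a b : K, a ⟶ b, G.obj m.1 ⟶ coprodObj famN := fun m =>
      G.map m.2.2 ≫ hW m.2.1
    let α : coprodObj famM ⟶ coprodObj famN := coprodDesc famM (fun i => vα (eM.symm i))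
    let β : coprodObj famM ⟶ coprodObj famN := coprodDesc famM (fun i => vβ (eM.symm i))
    have hα : ∀ i, coprodι famM i ≫ α = vα (eM.symm i) := fun i => coprodι_desc _ _ _
    have hβ : ∀ i, coprodι famM i ≫ β = vβ (eM.symm i) := fun i => coprodι_desc _ _ _
    have hvA : ∀ m : Σ a b : K, a ⟶ b, vα m ≫ mapA = vβ m ≫ mapA := by
      rintro ⟨a, b, m⟩
      show hW a ≫ mapA = (G.map m ≫ hW b) ≫ mapA
      rw [hWA a, Category.assoc, hWA b, huA]
    have hαβA : α ≫ mapA = β ≫ mapA := by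
      apply coprod_hom_ext
      intro i
      rw [← Category.assoc, ← Category.assoc, hα, hβ]
      exact hvA (eM.symm i)
    have hQmem : coeqObj α β ∈ TSet κ S := coeq_mem_TSet κ hκ S hWM hWobj α β
    have hc : α ≫ coeqπ α β = β ≫ coeqπ α β := coeq_condition' α β
    have hcoeq : ∀ m : Σ a b : K, a ⟶ b,
        vα m ≫ coeqπ α β = vβ m ≫ coeqπ α β := by
      intro m
      have h1 : vα (eM.symm (eM m)) ≫ coeqπ α β = vβ (eM.symm (eM m)) ≫ coeqπ α β := by
        rw [← hα (eM m), ← hβ (eM m), Category.assoc, Category.assoc, hc]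
      rwa [Equiv.symm_apply_apply] at h1
    refine ⟨coeqObj α β, hQmem, coeqDesc α β mapA hαβA,
      fun k => hW k ≫ coeqπ α β, ?_, ?_⟩
    · intro k
      rw [Category.assoc, coeqπ_desc]
      exact hWA k
    · intro a b m
      have := (hcoeq ⟨a, b, m⟩).symm
      show G.map m ≫ hW b ≫ coeqπ α β = hW a ≫ coeqπ α β
      rw [← Category.assoc]
      exact this
  -- Now build the cocone in the small model.
  let QC : Canon κ S A := CostructuredArrow.mk
    (Y := (⟨Q, hQmem⟩ : ObjectProperty.FullSubcategory (· ∈ TSet κ S))) qA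
  let φ : ∀ k, e.inverse.obj (F.obj k) ⟶ QC := fun k =>
    CostructuredArrow.homMk (ObjectProperty.homMk (ψ k)) (by exact hψA k)
  have hφnat : ∀ {a b : K} (m : a ⟶ b), e.inverse.map (F.map m) ≫ φ b = φ a := by
    intro a b m
    apply CostructuredArrow.hom_ext
    rw [Comma.comp_left]
    apply ObjectProperty.hom_ext
    exact hψnat a b m
  refine ⟨⟨e.functor.obj QC,
    { app := fun k => e.counitInv.app (F.obj k) ≫ e.functor.map (φ k)
      naturality := fun a b m => ?_ }⟩⟩
  simp only [Functor.const_obj_obj, Functor.const_obj_map, Category.comp_id]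
  rw [← Category.assoc]
  have hnat : F.map m ≫ e.counitInv.app (F.obj b) =
      e.counitInv.app (F.obj a) ≫ e.functor.map (e.inverse.map (F.map m)) := by
    simpa using e.counitInv.naturality (F.map m)
  rw [hnat, Category.assoc, ← e.functor.map_comp, hφnat m]

end Statement11

namespace Statement11

variable {C : Type u} [Category.{v} C]

lemma canonCocone_isColimit (κ : Cardinal.{v}) [HasColimitsOfSize.{v, v} C] (S : Set C)
    [Small.{v} S] (A : C) (hκ : κ.IsRegular)
    (hS : ∀ X ∈ S, IsCardPresentable κ X) (hdet : ObjectProperty.IsDetecting S) :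
    Nonempty (IsColimit (canonCoconeA κ S A)) := by
  let D := canonDiagram κ S A
  let ebar : colimit D ⟶ A := colimit.desc D (canonCoconeA κ S A)
  have hfilJ : IsCardFiltered κ (CanonJ κ S A) := canon_filtered κ S A hκ
  haveI hfil : IsFiltered (CanonJ κ S A) := isFiltered_of_isCardFiltered hκ.aleph0_le hfilJ
  let e := canonEquiv κ S A
  have hι : ∀ j, colimit.ι D j ≫ ebar = (canonCoconeA κ S A).ι.app j :=
    fun j => colimit.ι_desc _ _
  have hiso : IsIso ebar := by
    apply hdet
    intro s hs g
    have hsT : s ∈ TSet κ S := S_subset_TSet κ S hs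
    -- EXISTENCE
    have hex : ∃ h : s ⟶ colimit D, h ≫ ebar = g := by
      let Og : Canon κ S A := CostructuredArrow.mk
        (Y := (⟨s, hsT⟩ : ObjectProperty.FullSubcategory (· ∈ TSet κ S))) g
      let jg := e.functor.obj Og
      let η : Og ⟶ e.inverse.obj (e.functor.obj Og) := e.unit.app Og
      refine ⟨(ObjectProperty.ι (· ∈ TSet κ S)).map η.left ≫ colimit.ι D jg, ?_⟩
      refine (Category.assoc _ _ _).trans ((congrArg
        (fun x => (ObjectProperty.ι (· ∈ TSet κ S)).map η.left ≫ x) (hι jg)).trans ?_)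
      have hw := CostructuredArrow.w η
      exact hw
    -- UNIQUENESS
    have huniq : ∀ y₁ y₂ : s ⟶ colimit D, y₁ ≫ ebar = g → y₂ ≫ ebar = g → y₁ = y₂ := by
      intro y₁ y₂ hg₁ hg₂
      obtain ⟨hP⟩ := hS s hs (CanonJ κ S A) hfilJ
      haveI := hP
      have hcol : IsColimit ((coyoneda.obj (Opposite.op s)).mapCocone (colimit.cocone D)) :=
        isColimitOfPreserves _ (colimit.isColimit D)
      obtain ⟨j₁, q₁, hq₁⟩ := Types.jointly_surjective
        (D ⋙ coyoneda.obj (Opposite.op s)) hcol y₁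
      obtain ⟨j₂, q₂, hq₂⟩ := Types.jointly_surjective
        (D ⋙ coyoneda.obj (Opposite.op s)) hcol y₂
      have hq₁' : q₁ ≫ colimit.ι D j₁ = y₁ := hq₁
      have hq₂' : q₂ ≫ colimit.ι D j₂ = y₂ := hq₂
      let jm := IsFiltered.max j₁ j₂
      let p₁ : s ⟶ D.obj jm := q₁ ≫ D.map (IsFiltered.leftToMax j₁ j₂)
      let p₂ : s ⟶ D.obj jm := q₂ ≫ D.map (IsFiltered.rightToMax j₁ j₂)
      have hy₁ : p₁ ≫ colimit.ι D jm = y₁ := by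
        rw [Category.assoc, colimit.w D (IsFiltered.leftToMax j₁ j₂)]
        exact hq₁'
      have hy₂ : p₂ ≫ colimit.ι D jm = y₂ := by
        rw [Category.assoc, colimit.w D (IsFiltered.rightToMax j₁ j₂)]
        exact hq₂'
      have hga₁ : p₁ ≫ (canonCoconeA κ S A).ι.app jm = g := by
        rw [← hι jm]
        exact (Category.assoc _ _ _).symm.trans ((congrArg (· ≫ ebar) hy₁).trans hg₁)
      have hga₂ : p₂ ≫ (canonCoconeA κ S A).ι.app jm = g := by
        rw [← hι jm]
        exact (Category.assoc _ _ _).symm.trans ((congrArg (· ≫ ebar) hy₂).trans hg₂)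
      have hcond : p₁ ≫ (canonCoconeA κ S A).ι.app jm =
          p₂ ≫ (canonCoconeA κ S A).ι.app jm := by rw [hga₁, hga₂]
      have hQm : coeqObj p₁ p₂ ∈ TSet κ S :=
        coeq_mem_TSet κ hκ S hsT (canonDiagram_mem κ S A jm) p₁ p₂
      let qA : coeqObj p₁ p₂ ⟶ A := coeqDesc p₁ p₂ ((canonCoconeA κ S A).ι.app jm) hcond
      let QCm : Canon κ S A := CostructuredArrow.mk
        (Y := (⟨coeqObj p₁ p₂, hQm⟩ : ObjectProperty.FullSubcategory (· ∈ TSet κ S))) qA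
      let φ : e.inverse.obj jm ⟶ QCm := CostructuredArrow.homMk (ObjectProperty.homMk (coeqπ p₁ p₂))
        (coeqπ_desc p₁ p₂ ((canonCoconeA κ S A).ι.app jm) hcond)
      let mJ : jm ⟶ e.functor.obj QCm := e.counitInv.app jm ≫ e.functor.map φ
      have hDmJ : p₁ ≫ D.map mJ = p₂ ≫ D.map mJ := by
        have h1 : D.map mJ = (projC κ S A).map (e.inverse.map (e.counitInv.app jm)) ≫
            (projC κ S A).map (e.inverse.map (e.functor.map φ)) := by
          show D.map (e.counitInv.app jm ≫ e.functor.map φ) = _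
          rw [show D.map (e.counitInv.app jm ≫ e.functor.map φ) =
            (projC κ S A).map (e.inverse.map (e.counitInv.app jm ≫ e.functor.map φ)) from rfl]
          rw [Functor.map_comp, Functor.map_comp]
        have h2 : e.inverse.map (e.counitInv.app jm) = e.unit.app (e.inverse.obj jm) :=
          (e.unit_app_inverse jm).symm
        have h3 : e.unit.app (e.inverse.obj jm) ≫ e.inverse.map (e.functor.map φ) =
            φ ≫ e.unit.app QCm := by
          simpa using (e.unit.naturality φ).symm
        rw [h1, h2, ← Functor.map_comp, h3, Functor.map_comp]
        have h4 : (projC κ S A).map φ = coeqπ p₁ p₂ := rfl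
        exact (Category.assoc _ _ _).symm.trans ((congrArg (· ≫ (projC κ S A).map
          (e.unit.app QCm)) (coeq_condition' p₁ p₂)).trans (Category.assoc _ _ _))
      rw [← hy₁, ← hy₂, ← colimit.w D mJ, ← Category.assoc, ← Category.assoc, hDmJ]
    obtain ⟨h, hh⟩ := hex
    exact ⟨h, hh, fun y hy => huniq y h hy hh⟩
  refine ⟨IsColimit.ofIsoColimit (colimit.isColimit D)
    (Cocones.ext (@asIso _ _ _ _ ebar hiso) (fun j => hι j))⟩

end Statement11

open Statement11

/-- Let `C` be locally `κ`-presentable and `L` a full reflective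
subcategory closed under `κ`-filtered colimits (the inclusion preserves them), with
reflection units `ρ_X`.  Then an object `A` lies in `L` iff it is orthogonal to `ρ_Y`
for every `κ`-presentable object `Y`. -/
theorem essImage_iff_orthogonal_units (κ : Cardinal.{v}) (hκ : κ.IsRegular)
    (hC : IsLocallyPresentable κ C) (P : C → Prop)
    [Reflective (ObjectProperty.ι P)]
    (hclosed : ∀ (J : Type v) [SmallCategory J], IsCardFiltered κ J →
      Nonempty (PreservesColimitsOfShape J (ObjectProperty.ι P)))
    (A : C) :
    (ObjectProperty.ι P).essImage A ↔
      ∀ Y : C, IsCardPresentable κ Y →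
        Function.Bijective
          (fun g : (ObjectProperty.ι P).obj
              ((reflector (ObjectProperty.ι P)).obj Y) ⟶ A =>
            (reflectorAdjunction (ObjectProperty.ι P)).unit.app Y ≫ g) := by
  constructor
  · -- easy direction
    intro hA Y _
    have heq : (fun g : (ObjectProperty.ι P).obj
          ((reflector (ObjectProperty.ι P)).obj Y) ⟶ A =>
            (reflectorAdjunction (ObjectProperty.ι P)).unit.app Y ≫ g) =
        ((unitCompPartialBijective Y hA).symm : _ → _) := by
      funext g
      exact (unitCompPartialBijective_symm_apply Y hA g).symm
    rw [heq]
    exact (unitCompPartialBijective Y hA).symm.bijective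
  · -- hard direction
    intro horth
    obtain ⟨hcolim, Sset, hsmall, hdet, hpres⟩ := hC
    haveI := hcolim
    haveI := hsmall
    have hJfil := canon_filtered κ Sset A hκ
    obtain ⟨hcolA⟩ := canonCocone_isColimit κ Sset A hκ hpres hdet
    haveI : PreservesColimitsOfSize.{v, v} (reflector (ObjectProperty.ι P)) :=
      (reflectorAdjunction (ObjectProperty.ι P)).leftAdjoint_preservesColimits
    obtain ⟨hip⟩ := hclosed (CanonJ κ Sset A) hJfil
    haveI := hip
    haveI : PreservesColimitsOfShape (CanonJ κ Sset A)
        (reflector (ObjectProperty.ι P) ⋙ ObjectProperty.ι P) := by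
      infer_instance
    have hRcol : IsColimit ((reflector (ObjectProperty.ι P) ⋙
        ObjectProperty.ι P).mapCocone (canonCoconeA κ Sset A)) :=
      isColimitOfPreserves _ hcolA
    have hpresD : ∀ j, IsCardPresentable κ ((canonDiagram κ Sset A).obj j) := fun j =>
      TSet_presentable κ hκ Sset hpres _ (canonDiagram_mem κ Sset A j)
    have hbij := fun j => horth ((canonDiagram κ Sset A).obj j) (hpresD j)
    choose f hf using fun j => (hbij j).2 ((canonCoconeA κ Sset A).ι.app j)
    have hf' : ∀ j, (reflectorAdjunction (ObjectProperty.ι P)).unit.app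
        ((canonDiagram κ Sset A).obj j) ≫ f j = (canonCoconeA κ Sset A).ι.app j :=
      fun j => hf j
    have hinj : ∀ (j) (g₁ g₂ : (ObjectProperty.ι P).obj
          ((reflector (ObjectProperty.ι P)).obj ((canonDiagram κ Sset A).obj j)) ⟶ A),
        (reflectorAdjunction (ObjectProperty.ι P)).unit.app
            ((canonDiagram κ Sset A).obj j) ≫ g₁ =
          (reflectorAdjunction (ObjectProperty.ι P)).unit.app
            ((canonDiagram κ Sset A).obj j) ≫ g₂ → g₁ = g₂ := by
      intro j g₁ g₂ h
      exact (hbij j).1 h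
    have hnat : ∀ {j j'} (m : j ⟶ j'),
        (reflector (ObjectProperty.ι P) ⋙ ObjectProperty.ι P).map
          ((canonDiagram κ Sset A).map m) ≫ f j' = f j := by
      intro j j' m
      apply hinj j
      rw [← Category.assoc,
        ← (reflectorAdjunction (ObjectProperty.ι P)).unit.naturality
          ((canonDiagram κ Sset A).map m)]
      show ((𝟭 C).map ((canonDiagram κ Sset A).map m) ≫
        (reflectorAdjunction (ObjectProperty.ι P)).unit.app
          ((canonDiagram κ Sset A).obj j')) ≫ f j' = _
      rw [Category.assoc, hf' j', hf' j]
      show (canonDiagram κ Sset A).map m ≫ (canonCoconeA κ Sset A).ι.app j' = _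
      rw [(canonCoconeA κ Sset A).w m]
    let rc : Cocone (canonDiagram κ Sset A ⋙
        (reflector (ObjectProperty.ι P) ⋙ ObjectProperty.ι P)) :=
      ⟨A, { app := f
            naturality := fun j j' m => by
              simpa using hnat m }⟩
    let r' : (ObjectProperty.ι P).obj
        ((reflector (ObjectProperty.ι P)).obj A) ⟶ A := hRcol.desc rc
    have hr : (reflectorAdjunction (ObjectProperty.ι P)).unit.app A ≫ r' = 𝟙 A := by
      apply hcolA.hom_ext
      intro j
      have h1 : (canonCoconeA κ Sset A).ι.app j ≫
          (reflectorAdjunction (ObjectProperty.ι P)).unit.app A =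
          (reflectorAdjunction (ObjectProperty.ι P)).unit.app
              ((canonDiagram κ Sset A).obj j) ≫
            (reflector (ObjectProperty.ι P) ⋙ ObjectProperty.ι P).map
              ((canonCoconeA κ Sset A).ι.app j) := by
        exact (reflectorAdjunction (ObjectProperty.ι P)).unit.naturality
          ((canonCoconeA κ Sset A).ι.app j)
      have h2 : (reflector (ObjectProperty.ι P) ⋙ ObjectProperty.ι P).map
          ((canonCoconeA κ Sset A).ι.app j) ≫ r' = f j :=
        hRcol.fac rc j
      exact (Category.assoc _ _ _).symm.trans ((congrArg (· ≫ r') h1).trans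
        ((Category.assoc _ _ _).trans ((congrArg (fun x => (reflectorAdjunction
          (ObjectProperty.ι P)).unit.app ((canonDiagram κ Sset A).obj j) ≫ x) h2).trans
            ((hf' j).trans (Category.comp_id _).symm))))
    haveI : IsSplitMono ((reflectorAdjunction (ObjectProperty.ι P)).unit.app A) :=
      IsSplitMono.mk' ⟨r', hr⟩
    exact mem_essImage_of_unit_isSplitMono
end
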